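/- For p ∈ (1, ∞) and the function Ψ(x) = |x|^(p-2)·x (with Ψ(0)=0), if β ≥ max(p,2), then for all real x, y: (Ψ(y) − Ψ(x))·(y − x) ≥ 2^(2−p)·min(1, p−1)·|y − x|^β·(|y| + |x|)^(p−β). -/

import Mathlib

noncomputable def Psi (p : ℝ) (x : ℝ) : ℝ := Real.sign x * |x| ^ (p - 1)

lemma psi_nonneg_eq (p : ℝ) (hp : 1 < p) {y : ℝ} (hy : 0 ≤ y) :
    Psi p y = y ^ (p - 1) := by
  rcases hy.eq_or_lt with h | h
  · simp [Psi, ← h, Real.zero_rpow (by intro hc; linarith [hc] : p - 1 ≠ 0)]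
  · simp [Psi, Real.sign_of_pos h, abs_of_pos h]

lemma psi_neg_eq (p : ℝ) {y : ℝ} (hy : y < 0) :
    Psi p y = -(-y) ^ (p - 1) := by
  simp [Psi, Real.sign_of_neg hy, abs_of_neg hy]

lemma psi_neg (p t : ℝ) : Psi p (-t) = -Psi p t := by
  simp [Psi, Real.sign_neg]

lemma rpow_superadd {a b q : ℝ} (ha : 0 ≤ a) (hb : 0 ≤ b) (hq : 1 ≤ q) :
    a ^ q + b ^ q ≤ (a + b) ^ q := by
  have h := NNReal.add_rpow_le_rpow_add a.toNNReal b.toNNReal hq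
  rw [← NNReal.coe_le_coe] at h
  push_cast at h
  rwa [Real.coe_toNNReal a ha, Real.coe_toNNReal b hb] at h

lemma rpow_subadd {a b q : ℝ} (ha : 0 ≤ a) (hb : 0 ≤ b) (hq0 : 0 ≤ q) (hq : q ≤ 1) :
    (a + b) ^ q ≤ a ^ q + b ^ q := by
  have h := NNReal.rpow_add_le_add_rpow a.toNNReal b.toNNReal hq0 hq
  rw [← NNReal.coe_le_coe] at h
  push_cast at h
  rwa [Real.coe_toNNReal a ha, Real.coe_toNNReal b hb] at h

lemma rpow_add_le_mul {a b q : ℝ} (ha : 0 ≤ a) (hb : 0 ≤ b) (hq : 1 ≤ q) :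
    (a + b) ^ q ≤ 2 ^ (q - 1) * (a ^ q + b ^ q) := by
  have h := NNReal.rpow_add_le_mul_rpow_add_rpow a.toNNReal b.toNNReal hq
  rw [← NNReal.coe_le_coe] at h
  push_cast at h
  rwa [Real.coe_toNNReal a ha, Real.coe_toNNReal b hb] at h

lemma key2 {q : ℝ} (hq0 : 0 < q) (hq1 : q ≤ 1) : q * 2 ^ (1 - q) ≤ 1 := by
  have h : ((1:ℝ) + 1) ^ (1 - q) ≤ 1 + (1 - q) * 1 := by
    have := rpow_one_add_le_one_add_mul_self (s := (1:ℝ)) (by norm_num)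
      (p := 1 - q) (by linarith) (by linarith)
    simpa using this
  norm_num at h
  nlinarith [sq_nonneg (1 - q), Real.rpow_nonneg (by norm_num : (0:ℝ) ≤ 2) (1-q)]

lemma key1 {q : ℝ} (hq0 : 0 < q) (hq1 : q ≤ 1) {t : ℝ} (ht0 : 0 ≤ t) (ht1 : t ≤ 1) :
    2 * q * t ≤ (1 + t) ^ q - (1 - t) ^ q := by
  set F : ℝ → ℝ := fun s => (1 + s) ^ q - (1 - s) ^ q - 2 * q * s with hF
  have hder : ∀ s ∈ Set.Ioo (0:ℝ) 1, HasDerivAt F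
      (q * (1 + s) ^ (q - 1) + q * (1 - s) ^ (q - 1) - 2 * q) s := by
    intro s hs
    have h1 : HasDerivAt (fun s : ℝ => 1 + s) 1 s := by
      simpa using (hasDerivAt_id s).const_add 1
    have h2 : HasDerivAt (fun s : ℝ => 1 - s) (-1) s := by
      simpa using (hasDerivAt_id s).const_sub 1
    have hp1 : HasDerivAt (fun s : ℝ => (1 + s) ^ q)
        (q * (1 + s) ^ (q - 1) * 1) s :=
      (Real.hasDerivAt_rpow_const (x := 1 + s) (p := q)
        (Or.inl (by nlinarith [hs.1]))).comp s h1
    have hp2 : HasDerivAt (fun s : ℝ => (1 - s) ^ q)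
        (q * (1 - s) ^ (q - 1) * (-1)) s :=
      (Real.hasDerivAt_rpow_const (x := 1 - s) (p := q)
        (Or.inl (by nlinarith [hs.2]))).comp s h2
    have := ((hp1.sub hp2).sub ((hasDerivAt_id s).const_mul (2 * q)))
    exact this.congr_deriv (by ring)
  have hcont : ContinuousOn F (Set.Icc 0 1) := by
    apply ContinuousOn.sub
    apply ContinuousOn.sub
    · exact fun s _ => (Real.continuousAt_rpow_const _ _
        (Or.inr hq0.le)).comp (by fun_prop) |>.continuousWithinAt
    · exact fun s _ => (Real.continuousAt_rpow_const _ _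
        (Or.inr hq0.le)).comp (by fun_prop) |>.continuousWithinAt
    · fun_prop
  have hmono : MonotoneOn F (Set.Icc 0 1) := by
    apply monotoneOn_of_deriv_nonneg (convex_Icc 0 1) hcont
    · intro s hs
      rw [interior_Icc] at hs
      exact (hder s hs).differentiableAt.differentiableWithinAt
    · intro s hs
      rw [interior_Icc] at hs
      rw [(hder s hs).deriv]
      have ha : (0:ℝ) < (1 + s) ^ (q - 1) := Real.rpow_pos_of_pos (by nlinarith [hs.1]) _
      have hb : (0:ℝ) < (1 - s) ^ (q - 1) := Real.rpow_pos_of_pos (by nlinarith [hs.2]) _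
      have hab : (1:ℝ) ≤ (1 + s) ^ (q - 1) * (1 - s) ^ (q - 1) := by
        rw [← Real.mul_rpow (by nlinarith [hs.1]) (by nlinarith [hs.2])]
        exact Real.one_le_rpow_of_pos_of_le_one_of_nonpos
          (by nlinarith [hs.1, hs.2]) (by nlinarith [hs.1, hs.2]) (by linarith)
      nlinarith [sq_nonneg ((1 + s) ^ (q - 1) - (1 - s) ^ (q - 1))]
  have h0 : F 0 = 0 := by simp [hF]
  have := hmono (Set.mem_Icc.mpr ⟨le_refl 0, zero_le_one⟩) (Set.mem_Icc.mpr ⟨ht0, ht1⟩) ht0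
  rw [h0] at this
  simp only [hF] at this
  linarith

lemma core1 (p : ℝ) (hp2 : 2 ≤ p) (x y : ℝ) (hxy : |x| ≤ y) (hlt : x < y) :
    2 ^ (2 - p) * (y - x) ^ p ≤ (Psi p y - Psi p x) * (y - x) := by
  have hp : 1 < p := by linarith
  have hy : 0 ≤ y := (abs_nonneg x).trans hxy
  have hq : 1 ≤ p - 1 := by linarith
  set q := p - 1 with hqdef
  have hd : 0 < y - x := by linarith
  rcases le_or_gt 0 x with hx0 | hx0
  · set m := (y - x) / 2 with hmdef
    have hm0 : 0 < m := by rw [hmdef]; linarith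
    have s1 : x ^ q + m ^ q ≤ (x + m) ^ q := rpow_superadd hx0 hm0.le hq
    have s2 : (x + m) ^ q + m ^ q ≤ (x + m + m) ^ q := rpow_superadd (by linarith) hm0.le hq
    have hyx : y = x + m + m := by rw [hmdef]; ring
    have key : x ^ q + 2 * m ^ q ≤ y ^ q := by rw [hyx]; linarith
    rw [psi_nonneg_eq p hp hy, psi_nonneg_eq p hp hx0]
    have hrw : 2 ^ (2 - p) * (y - x) ^ p = 4 * (m ^ q * m) := by
      have h1 : y - x = 2 * m := by rw [hmdef]; ring
      rw [h1, Real.mul_rpow (by norm_num) hm0.le, show (2:ℝ) ^ (2-p) * ((2:ℝ) ^ p * m ^ p)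
          = ((2:ℝ) ^ (2-p) * (2:ℝ) ^ p) * m ^ p by ring, ← Real.rpow_add two_pos,
        show (2:ℝ) - p + p = ((2:ℕ):ℝ) by push_cast; ring, Real.rpow_natCast,
        show p = q + 1 by rw [hqdef]; ring, Real.rpow_add hm0, Real.rpow_one]
      norm_num
    rw [hrw]
    nlinarith [key, hm0, Real.rpow_nonneg hm0.le q,
      mul_le_mul_of_nonneg_right key (by linarith : (0:ℝ) ≤ 2 * m)]
  · have ha : 0 < -x := by linarith
    rw [psi_nonneg_eq p hp hy, psi_neg_eq p hx0]
    have hconv : (y + -x) ^ q ≤ 2 ^ (q - 1) * (y ^ q + (-x) ^ q) :=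
      rpow_add_le_mul hy ha.le hq
    have hpos : (0:ℝ) < y + -x := by linarith
    have hsub : y - x = y + -x := by ring
    have h2q : (0:ℝ) < 2 ^ ((1:ℝ) - q) := Real.rpow_pos_of_pos two_pos _
    calc 2 ^ (2 - p) * (y - x) ^ p
        = 2 ^ ((1:ℝ) - q) * ((y + -x) ^ q * (y + -x)) := by
          rw [show (2:ℝ) - p = 1 - q by rw [hqdef]; ring, hsub,
            show p = q + 1 by rw [hqdef]; ring, Real.rpow_add hpos, Real.rpow_one]
      _ ≤ 2 ^ ((1:ℝ) - q) * ((2 ^ (q - 1) * (y ^ q + (-x) ^ q)) * (y + -x)) := by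
          apply mul_le_mul_of_nonneg_left (mul_le_mul_of_nonneg_right hconv hpos.le) h2q.le
      _ = ((2:ℝ) ^ ((1:ℝ) - q) * 2 ^ (q - 1)) * ((y ^ q + (-x) ^ q) * (y + -x)) := by ring
      _ = (y ^ q - -(-x) ^ q) * (y - x) := by
          rw [← Real.rpow_add two_pos, show (1:ℝ) - q + (q - 1) = 0 by ring,
            Real.rpow_zero, hsub]
          ring

lemma core2 (p : ℝ) (hp : 1 < p) (hp2 : p ≤ 2) (x y : ℝ) (hxy : |x| ≤ y) (hlt : x < y) :
    2 ^ (2 - p) * (p - 1) * (y - x) ^ (2:ℝ) * (y + |x|) ^ (p - 2)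
      ≤ (Psi p y - Psi p x) * (y - x) := by
  have hy : 0 ≤ y := (abs_nonneg x).trans hxy
  set q := p - 1 with hqdef
  have hq0 : 0 < q := by rw [hqdef]; linarith
  have hq1 : q ≤ 1 := by rw [hqdef]; linarith
  have hd : 0 < y - x := by linarith
  have hd2 : (y - x) ^ (2:ℝ) = (y - x) * (y - x) := by
    rw [show (2:ℝ) = ((2:ℕ):ℝ) by norm_num, Real.rpow_natCast]; ring
  rcases le_or_gt 0 x with hx0 | hx0
  · have hs : (0:ℝ) < x + y := by
      have hy0 : 0 < y := lt_of_le_of_lt hx0 hlt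
      linarith
    have ht0 : 0 ≤ (y - x) / (x + y) := by positivity
    have ht1 : (y - x) / (x + y) ≤ 1 := by rw [div_le_one hs]; linarith
    have k := key1 hq0 hq1 ht0 ht1
    have e1 : 1 + (y - x) / (x + y) = 2 * y / (x + y) := by field_simp; ring
    have e2 : 1 - (y - x) / (x + y) = 2 * x / (x + y) := by field_simp; ring
    rw [e1, e2] at k
    have hm : (0:ℝ) < (x + y) / 2 := by linarith
    have k2 := mul_le_mul_of_nonneg_right k (Real.rpow_nonneg hm.le q)
    rw [sub_mul, ← Real.mul_rpow (by positivity) hm.le,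
      ← Real.mul_rpow (by positivity) hm.le] at k2
    have e3 : 2 * y / (x + y) * ((x + y) / 2) = y := by field_simp
    have e4 : 2 * x / (x + y) * ((x + y) / 2) = x := by field_simp
    rw [e3, e4] at k2
    rw [psi_nonneg_eq p hp hy, psi_nonneg_eq p hp hx0, abs_of_nonneg hx0]
    have hA : ((x + y) / 2) ^ q = (x + y) ^ q / 2 ^ q := Real.div_rpow hs.le (by norm_num) q
    have hB : (y + x) ^ (p - 2) = (x + y) ^ q / (x + y) := by
      rw [show y + x = x + y by ring, show p - 2 = q - 1 by rw [hqdef]; ring,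
        Real.rpow_sub hs, Real.rpow_one]
    have hC : (2:ℝ) ^ (2 - p) = 2 / 2 ^ q := by
      rw [show (2:ℝ) - p = 1 - q by rw [hqdef]; ring, Real.rpow_sub two_pos, Real.rpow_one]
    have h2qpos : (0:ℝ) < 2 ^ q := Real.rpow_pos_of_pos two_pos q
    have hE : 2 ^ (2 - p) * q * (y - x) ^ (2:ℝ) * (y + x) ^ (p - 2)
        = (2 * q * ((y - x) / (x + y)) * ((x + y) / 2) ^ q) * (y - x) := by
      rw [hd2, hA, hB, hC]
      field_simp
    rw [hE]
    exact mul_le_mul_of_nonneg_right k2 hd.le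
  · have ha : 0 < -x := by linarith
    rw [psi_nonneg_eq p hp hy, psi_neg_eq p hx0, abs_of_neg hx0]
    have hpos : (0:ℝ) < y + -x := by linarith
    have hsub : y - x = y + -x := by ring
    have hsubadd : (y + -x) ^ q ≤ y ^ q + (-x) ^ q := rpow_subadd hy ha.le hq0.le hq1
    have hk2 := key2 hq0 hq1
    have hdq : (0:ℝ) < (y + -x) ^ q := Real.rpow_pos_of_pos hpos q
    have hE : 2 ^ (2 - p) * q * (y - x) ^ (2:ℝ) * (y + -x) ^ (p - 2)
        = (q * 2 ^ (1 - q)) * ((y + -x) ^ q * (y - x)) := by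
      rw [hd2, hsub, show p - 2 = q - 1 by rw [hqdef]; ring,
        show (2:ℝ) - p = 1 - q by rw [hqdef]; ring, Real.rpow_sub hpos, Real.rpow_one,
        show q = q + 1 - 1 by ring]
      have : (y + -x) ^ (q + 1 - 1) = (y + -x) ^ (q + 1) / (y + -x) := by
        rw [Real.rpow_sub hpos, Real.rpow_one]
      rw [this, Real.rpow_add hpos, Real.rpow_one]
      field_simp
    rw [hE]
    have step1 : (q * 2 ^ (1 - q)) * ((y + -x) ^ q * (y - x)) ≤ (y + -x) ^ q * (y - x) := by
      nlinarith [mul_pos hdq hd]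
    refine step1.trans ?_
    have : (y + -x) ^ q ≤ y ^ q - -(-x) ^ q := by linarith
    nlinarith [this, hd]

lemma red {d s p β γ : ℝ} (hd : 0 ≤ d) (hds : d ≤ s) (hγβ : γ ≤ β) (hγ : 0 < γ)
    (hs : 0 < s) : d ^ β * s ^ (p - β) ≤ d ^ γ * s ^ (p - γ) := by
  rcases hd.eq_or_lt with h | hd0
  · rw [← h, Real.zero_rpow (by linarith : β ≠ 0), Real.zero_rpow (by linarith : γ ≠ 0)]
    simp
  · have h1 : d ^ β = d ^ γ * d ^ (β - γ) := by
      rw [← Real.rpow_add hd0]; ring_nf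
    have h2 : s ^ (p - β) = s ^ (p - γ) * s ^ (γ - β) := by
      rw [← Real.rpow_add hs]; ring_nf
    rw [h1, h2]
    have h3 : d ^ (β - γ) * s ^ (γ - β) ≤ 1 := by
      rw [show γ - β = -(β - γ) by ring, Real.rpow_neg hs.le,
        ← div_eq_mul_inv, div_le_one (Real.rpow_pos_of_pos hs _)]
      exact Real.rpow_le_rpow hd0.le hds (by linarith)
    calc d ^ γ * d ^ (β - γ) * (s ^ (p - γ) * s ^ (γ - β))
        = (d ^ γ * s ^ (p - γ)) * (d ^ (β - γ) * s ^ (γ - β)) := by ring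
      _ ≤ (d ^ γ * s ^ (p - γ)) * 1 := by
          apply mul_le_mul_of_nonneg_left h3
          positivity
      _ = d ^ γ * s ^ (p - γ) := by ring

lemma psi_aux (p β : ℝ) (hp : 1 < p) (hβ : max p 2 ≤ β) (x y : ℝ) (hxy : |x| ≤ y) :
    2 ^ (2 - p) * min 1 (p - 1) * |y - x| ^ β * (|y| + |x|) ^ (p - β)
      ≤ (Psi p y - Psi p x) * (y - x) := by
  have hy : 0 ≤ y := (abs_nonneg x).trans hxy
  have hxle : x ≤ y := (le_abs_self x).trans hxy
  have hβ2 : (2:ℝ) ≤ β := le_trans (le_max_right p 2) hβ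
  rw [abs_of_nonneg (sub_nonneg.2 hxle), abs_of_nonneg hy]
  rcases hxle.eq_or_lt with h | hlt
  · subst h
    rw [sub_self, Real.zero_rpow (by linarith : β ≠ 0)]
    simp
  · have hd : 0 < y - x := by linarith
    have hs : 0 < y + |x| := by have := neg_abs_le x; linarith
    have hds : y - x ≤ y + |x| := by have := neg_abs_le x; linarith
    have hγ : (0:ℝ) < max p 2 := by have := le_max_right p 2; linarith
    have hred := red (γ := max p 2) hd.le hds hβ hγ hs (p := p)
    have hminpos : 0 < min 1 (p - 1) := lt_min one_pos (by linarith)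
    have hcpos : 0 ≤ 2 ^ (2 - p) * min 1 (p - 1) :=
      mul_nonneg (Real.rpow_nonneg (by norm_num) _) hminpos.le
    calc 2 ^ (2-p) * min 1 (p-1) * (y-x) ^ β * (y + |x|) ^ (p - β)
        = (2 ^ (2-p) * min 1 (p-1)) * ((y-x) ^ β * (y + |x|) ^ (p - β)) := by ring
      _ ≤ (2 ^ (2-p) * min 1 (p-1)) * ((y-x) ^ (max p 2) * (y + |x|) ^ (p - max p 2)) :=
          mul_le_mul_of_nonneg_left hred hcpos
      _ ≤ (Psi p y - Psi p x) * (y - x) := by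
          rcases le_total p 2 with hple | hpge
          · rw [max_eq_right hple, min_eq_right (by linarith : p - 1 ≤ 1)]
            have h2 := core2 p hp hple x y hxy hlt
            calc (2^(2-p) * (p-1)) * ((y-x)^(2:ℝ) * (y+|x|)^(p-2))
                = 2^(2-p)*(p-1)*(y-x)^(2:ℝ)*(y+|x|)^(p-2) := by ring
              _ ≤ _ := h2
          · rw [max_eq_left hpge, min_eq_left (by linarith), sub_self, Real.rpow_zero]
            have h1 := core1 p hpge x y hxy hlt
            calc (2^(2-p) * 1) * ((y-x)^p * 1) = 2^(2-p) * (y-x)^p := by ring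
              _ ≤ _ := h1

theorem psi_monotonicity (p β : ℝ) (hp : 1 < p) (hβ : max p 2 ≤ β) (x y : ℝ) :
    2 ^ (2 - p) * min 1 (p - 1) * |y - x| ^ β * (|y| + |x|) ^ (p - β)
      ≤ (Psi p y - Psi p x) * (y - x) := by
  rcases le_total 0 (x + y) with hsum | hsum
  · rcases le_total x y with hxy | hxy
    · exact psi_aux p β hp hβ x y (abs_le.mpr ⟨by linarith, hxy⟩)
    · have h := psi_aux p β hp hβ y x (abs_le.mpr ⟨by linarith, hxy⟩)
      rw [abs_sub_comm x y, add_comm |x| |y|] at h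
      linear_combination h
  · rcases le_total x y with hxy | hxy
    · have h := psi_aux p β hp hβ (-y) (-x) (abs_le.mpr ⟨by linarith, by linarith⟩)
      rw [show (-x : ℝ) - -y = y - x by ring] at h
      simp only [abs_neg, psi_neg] at h
      rw [add_comm |x| |y|] at h
      linear_combination h
    · have h := psi_aux p β hp hβ (-x) (-y) (abs_le.mpr ⟨by linarith, by linarith⟩)
      rw [show (-y : ℝ) - -x = -(y - x) by ring] at h
      simp only [abs_neg, psi_neg] at h
      linear_combination h
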